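/- Let G be a topological gyrogroup, X an infinite discrete space, and S(X) = X ∪ {a} its one-point compactification. If f : S(X) → G is continuous with f(a) = 0 and the subgyrogroup generated by f(S(X)) is dense in G, then S = f(S(X)) \ {0} is a suitable set for G. -/

import Mathlib

universe u

class Gyrogroup (G : Type u) where
  add : G → G → G
  zero : G
  neg : G → G
  gyr : G → G → G → G
  zero_add : ∀ x, add zero x = x
  add_zero : ∀ x, add x zero = x
  neg_add : ∀ x, add (neg x) x = zero
  add_neg : ∀ x, add x (neg x) = zero
  gyr_bij : ∀ x y, Function.Bijective (gyr x y)
  gyr_add : ∀ x y a b, gyr x y (add a b) = add (gyr x y a) (gyr x y b)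
  left_assoc : ∀ x y z, add x (add y z) = add (add x y) (gyr x y z)
  loop : ∀ x y, gyr (add x y) y = gyr x y

namespace Gyrogroup

variable {G : Type u}

instance [Gyrogroup G] : Add G := ⟨Gyrogroup.add⟩
instance [Gyrogroup G] : Zero G := ⟨Gyrogroup.zero⟩
instance [Gyrogroup G] : Neg G := ⟨Gyrogroup.neg⟩

/-- The gyrogroup cooperation `x ⊞ y = x ⊕ gyr[x, ⊖y](y)`. -/
def coadd [Gyrogroup G] (x y : G) : G := x + gyr x (-y) y

/-- `S` is a subgyrogroup: contains the identity and is closed under `⊕`, `⊖` and the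
gyroautomorphisms. -/
def IsSubgyro [Gyrogroup G] (S : Set G) : Prop :=
  (0 : G) ∈ S ∧ (∀ ⦃a b : G⦄, a ∈ S → b ∈ S → a + b ∈ S) ∧
    (∀ ⦃a : G⦄, a ∈ S → -a ∈ S) ∧
    ∀ ⦃a b c : G⦄, a ∈ S → b ∈ S → c ∈ S → gyr a b c ∈ S

/-- The subgyrogroup generated by `A`. -/
def gen [Gyrogroup G] (A : Set G) : Set G := ⋂₀ {S : Set G | IsSubgyro S ∧ A ⊆ S}

/-- `N` is a normal subgyrogroup: the kernel of a gyrogroup homomorphism. -/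
def IsNormalSubgyro [Gyrogroup G] (N : Set G) : Prop :=
  ∃ (H : Type u) (i : Gyrogroup H) (f : G → H),
    (∀ a b : G, f (a + b) = i.add (f a) (f b)) ∧ N = f ⁻¹' {i.zero}

/-- A (Hausdorff) topological gyrogroup. -/
class TopGyrogroup (G : Type u) [Gyrogroup G] [TopologicalSpace G] : Prop where
  t2 : T2Space G
  continuous_add : Continuous fun p : G × G => p.1 + p.2
  continuous_neg : Continuous fun x : G => -x

/-- `μ` is a neighborhood base at `0` consisting of gyr-invariant sets. -/
def IsGyroNhdBase [Gyrogroup G] [TopologicalSpace G] (μ : Set (Set G)) : Prop :=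
  (∀ U ∈ μ, U ∈ nhds (0 : G)) ∧ (∀ W ∈ nhds (0 : G), ∃ U ∈ μ, U ⊆ W) ∧
    ∀ U ∈ μ, ∀ x y : G, gyr x y '' U = U

/-- A strongly topological gyrogroup: some neighborhood base at `0` is gyr-invariant. -/
def StronglyTop (G : Type u) [Gyrogroup G] [TopologicalSpace G] : Prop :=
  ∃ μ : Set (Set G), IsGyroNhdBase μ

/-- `S` is a suitable set for `G`. -/
def IsSuitable [Gyrogroup G] [TopologicalSpace G] (S : Set G) : Prop :=
  DiscreteTopology S ∧ IsClosed (S ∪ {(0 : G)}) ∧ Dense (gen S)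

end Gyrogroup

namespace Gyrogroup
variable {G : Type u} [Gyrogroup G]

lemma isSubgyro_gen' (A : Set G) : IsSubgyro (gen A) := by
  refine ⟨?_, ?_, ?_, ?_⟩
  · exact fun S hS => hS.1.1
  · intro a b ha hb S hS
    exact hS.1.2.1 (ha S hS) (hb S hS)
  · intro a ha S hS
    exact hS.1.2.2.1 (ha S hS)
  · intro a b c ha hb hc S hS
    exact hS.1.2.2.2 (ha S hS) (hb S hS) (hc S hS)

lemma subset_gen' (A : Set G) : A ⊆ gen A := fun a ha S hS => hS.2 ha

lemma gen_subset' {A T : Set G} (hT : IsSubgyro T) (h : A ⊆ T) : gen A ⊆ T :=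
  Set.sInter_subset_of_mem ⟨hT, h⟩

end Gyrogroup

open Gyrogroup
theorem suitable_of_onePoint_map {G : Type u} [Gyrogroup G] [TopologicalSpace G]
    [TopGyrogroup G] (X : Type u) [TopologicalSpace X] [DiscreteTopology X] [Infinite X]
    (f : OnePoint X → G) (hf : Continuous f) (hfa : f OnePoint.infty = 0)
    (hdense : Dense (gen (Set.range f))) :
    IsSuitable (Set.range f \ {(0 : G)}) := by
  haveI := TopGyrogroup.t2 (G := G)
  have h0 : (0 : G) ∈ Set.range f := ⟨OnePoint.infty, hfa⟩
  have hcomp : IsCompact (Set.range f) := isCompact_range hf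
  have hclosed : IsClosed (Set.range f) := hcomp.isClosed
  set S : Set G := Set.range f \ {(0 : G)} with hSdef
  have hSunion : S ∪ {(0 : G)} = Set.range f := by
    rw [hSdef, Set.diff_union_self]
    exact Set.union_eq_self_of_subset_right (by simpa using h0)
  have key : ∀ s ∈ S, ∃ U : Set G, IsOpen U ∧ U ∩ S = {s} := by
    intro s hs
    have hs0 : s ≠ 0 := by simpa using hs.2
    obtain ⟨V, W, hV, hW, hsV, h0W, hVW⟩ := t2_separation hs0
    set C : Set (OnePoint X) := (f ⁻¹' W)ᶜ with hCdef
    have hCclosed : IsClosed C := (hW.preimage hf).isClosed_compl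
    have hCcomp : IsCompact C := hCclosed.isCompact
    have hdiscC : DiscreteTopology C := by
      rw [discreteTopology_iff_isOpen_singleton]
      rintro ⟨x, hx⟩
      have hxinf : x ≠ OnePoint.infty := by
        rintro rfl
        exact hx (by simpa [hfa] using h0W)
      obtain ⟨y, rfl⟩ := OnePoint.ne_infty_iff_exists.1 hxinf
      have hop : IsOpen ({(y : OnePoint X)} : Set (OnePoint X)) := by
        have := OnePoint.isOpenEmbedding_coe (X := X) |>.isOpenMap {y} (isOpen_discrete _)
        simpa using this
      have : ({⟨(y : OnePoint X), hx⟩} : Set C) = Subtype.val ⁻¹' {(y : OnePoint X)} := by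
        ext z
        simp [Subtype.ext_iff]
      rw [this]
      exact hop.preimage continuous_subtype_val
    have hCfin : C.Finite := hCcomp.finite (isDiscrete_iff_discreteTopology.mpr hdiscC)
    have hVfin : (V ∩ S).Finite := by
      refine (hCfin.image f).subset ?_
      rintro g ⟨hgV, ⟨x, rfl⟩, -⟩
      refine ⟨x, ?_, rfl⟩
      intro hxW
      exact Set.disjoint_left.1 hVW hgV hxW
    have hFfin : ((V ∩ S) \ {s}).Finite := hVfin.diff
    refine ⟨V ∩ ((V ∩ S) \ {s})ᶜ, hV.inter hFfin.isClosed.isOpen_compl, ?_⟩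
    ext g
    constructor
    · rintro ⟨⟨hgV, hgF⟩, hgS⟩
      by_contra hgs
      exact hgF ⟨⟨hgV, hgS⟩, hgs⟩
    · rintro rfl
      exact ⟨⟨hsV, fun h => h.2 rfl⟩, hs⟩
  refine ⟨?_, ?_, ?_⟩
  · rw [discreteTopology_iff_isOpen_singleton]
    rintro ⟨s, hs⟩
    obtain ⟨U, hU, hUS⟩ := key s hs
    have : ({⟨s, hs⟩} : Set S) = Subtype.val ⁻¹' U := by
      ext z
      constructor
      · rintro rfl
        have : s ∈ U ∩ S := hUS ▸ rfl
        exact this.1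
      · intro hz
        have : (z : G) ∈ U ∩ S := ⟨hz, z.2⟩
        rw [hUS] at this
        exact Subtype.ext this
    rw [this]
    exact hU.preimage continuous_subtype_val
  · rw [hSunion]
    exact hclosed
  · refine hdense.mono (gen_subset' (isSubgyro_gen' S) ?_)
    rw [← hSunion]
    exact Set.union_subset (subset_gen' S)
      (by simpa using (isSubgyro_gen' S).1)
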